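/- Let ω be an arbitrary modulus of continuity and E ⊆ 𝕋 closed of Lebesgue measure zero. Then J_ω(E) = K_ω(E), where K_ω(E) = {f ∈ I_ω(E) : lim_{δ→0} sup{ |f(z)−f(w)|/ω(|z−w|) : z,w ∈ 𝔻, z≠w, d(z,E) ≤ δ, d(w,E) ≤ δ } = 0}. -/

import Mathlib

open Complex Metric Set MeasureTheory Filter

noncomputable section

/-- A modulus of continuity: nonnegative, nondecreasing, continuous on `[0,2]`,
vanishing at `0`, not identically zero, with `t ↦ ω t / t` nonincreasing. -/
structure ModulusOfContinuity where
  toFun : ℝ → ℝ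
  nonneg : ∀ t ∈ Set.Icc (0:ℝ) 2, 0 ≤ toFun t
  mono : MonotoneOn toFun (Set.Icc (0:ℝ) 2)
  cont : ContinuousOn toFun (Set.Icc (0:ℝ) 2)
  zero : toFun 0 = 0
  nontrivial : ∃ t ∈ Set.Icc (0:ℝ) 2, toFun t ≠ 0
  quot_anti : AntitoneOn (fun t => toFun t / t) (Set.Ioc (0:ℝ) 2)

instance : CoeFun ModulusOfContinuity (fun _ => ℝ → ℝ) := ⟨ModulusOfContinuity.toFun⟩

/-- The condition `inf_{0<t≤1} ω(t²)/ω(t) > 0`. -/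
def EtaPos (ω : ModulusOfContinuity) : Prop :=
  ∃ η > (0:ℝ), ∀ t ∈ Set.Ioc (0:ℝ) 1, η * ω t ≤ ω (t ^ 2)

/-- Membership in `H^∞`: bounded analytic on the open unit disk. -/
def MemHinf (f : ℂ → ℂ) : Prop :=
  DifferentiableOn ℂ f (ball (0:ℂ) 1) ∧ ∃ M : ℝ, ∀ z ∈ ball (0:ℂ) 1, ‖f z‖ ≤ M

/-- Membership in the big Lipschitz algebra `Lip_ω` (boundary form, by Tamrazov's theorem):
continuous on the closed disk, analytic in the open disk, and `ω`-Lipschitz on the circle. -/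
def MemLip (ω : ModulusOfContinuity) (f : ℂ → ℂ) : Prop :=
  ContinuousOn f (closedBall (0:ℂ) 1) ∧ DifferentiableOn ℂ f (ball (0:ℂ) 1) ∧
    ∃ C : ℝ, ∀ ξ ∈ sphere (0:ℂ) 1, ∀ ζ ∈ sphere (0:ℂ) 1, ξ ≠ ζ →
      ‖f ξ - f ζ‖ ≤ C * ω (‖ξ - ζ‖)

/-- Supremum norm over the closed unit disk. -/
def supNorm (f : ℂ → ℂ) : ℝ :=
  sSup ((fun z => ‖f z‖) '' closedBall (0:ℂ) 1)

/-- The `ω`-Lipschitz seminorm on the unit circle. -/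
def lipSemi (ω : ModulusOfContinuity) (f : ℂ → ℂ) : ℝ :=
  sSup ((fun p : ℂ × ℂ => ‖f p.1 - f p.2‖ / ω (‖p.1 - p.2‖)) ''
    {p : ℂ × ℂ | p.1 ∈ sphere (0:ℂ) 1 ∧ p.2 ∈ sphere (0:ℂ) 1 ∧ p.1 ≠ p.2})

/-- The norm `‖f‖_ω = ‖f‖_∞ + sup_{ξ≠ζ∈𝕋} |f ξ - f ζ|/ω(|ξ-ζ|)`. -/
def lipNorm (ω : ModulusOfContinuity) (f : ℂ → ℂ) : ℝ := supNorm f + lipSemi ω f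

/-- A closed ideal of the Banach algebra `Lip_ω`. -/
structure ClosedIdealLip (ω : ModulusOfContinuity) where
  carrier : Set (ℂ → ℂ)
  mem_lip : ∀ f ∈ carrier, MemLip ω f
  add_mem : ∀ f ∈ carrier, ∀ g ∈ carrier, (fun z => f z + g z) ∈ carrier
  smul_mem : ∀ (c : ℂ), ∀ f ∈ carrier, (fun z => c * f z) ∈ carrier
  mul_mem : ∀ f ∈ carrier, ∀ g, MemLip ω g → (fun z => f z * g z) ∈ carrier
  closed_mem : ∀ f, MemLip ω f →
    (∀ ε > (0:ℝ), ∃ g ∈ carrier, lipNorm ω (fun z => f z - g z) ≤ ε) → f ∈ carrier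

/-- The hull `E_I = {ξ ∈ 𝕋 : f ξ = 0 for all f ∈ I}`. -/
def hullSet (I : Set (ℂ → ℂ)) : Set ℂ :=
  {ξ | ξ ∈ sphere (0:ℂ) 1 ∧ ∀ f ∈ I, f ξ = 0}

/-- `E(δ) = {ξ ∈ 𝕋 : d(ξ,E) ≤ δ}`. -/
def ENbhd (E : Set ℂ) (δ : ℝ) : Set ℂ :=
  {ξ | ξ ∈ sphere (0:ℂ) 1 ∧ Metric.infDist ξ E ≤ δ}

/-- The condition `lim_{δ→0} sup_{ξ≠ζ∈E(δ)} |f ξ - f ζ|/ω(|ξ-ζ|) = 0`. -/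
def JCond (ω : ModulusOfContinuity) (E : Set ℂ) (f : ℂ → ℂ) : Prop :=
  ∀ ε > (0:ℝ), ∃ δ > (0:ℝ), ∀ ξ ∈ ENbhd E δ, ∀ ζ ∈ ENbhd E δ, ξ ≠ ζ →
    ‖f ξ - f ζ‖ ≤ ε * ω (‖ξ - ζ‖)

/-- `I_ω(E)`. -/
def MemI (ω : ModulusOfContinuity) (E : Set ℂ) (f : ℂ → ℂ) : Prop :=
  MemLip ω f ∧ ∀ ξ ∈ E, f ξ = 0

/-- `J_ω(E)`. -/
def MemJ (ω : ModulusOfContinuity) (E : Set ℂ) (f : ℂ → ℂ) : Prop :=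
  MemI ω E f ∧ JCond ω E f

/-- `u` divides `f` in `H^∞`: `f / u ∈ H^∞`. -/
def DividesIn (u f : ℂ → ℂ) : Prop :=
  ∃ h : ℂ → ℂ, MemHinf h ∧ ∀ z ∈ ball (0:ℂ) 1, f z = u z * h z

/-- An inner function: bounded by 1, analytic on the disk, with radial limits of
modulus 1 at almost every boundary point. -/
def IsInner (u : ℂ → ℂ) : Prop :=
  DifferentiableOn ℂ u (ball (0:ℂ) 1) ∧ (∀ z ∈ ball (0:ℂ) 1, ‖u z‖ ≤ 1) ∧
  ∀ᵐ (θ : ℝ) ∂(volume : Measure ℝ),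
    Tendsto (fun r : ℝ => ‖u ((r : ℂ) * Complex.exp ((θ : ℂ) * Complex.I))‖)
      (nhdsWithin 1 (Set.Iio 1)) (nhds 1)

/-- `U` is the greatest common inner divisor of the inner parts of the nonzero members of `I`. -/
def IsGcdInner (I : Set (ℂ → ℂ)) (U : ℂ → ℂ) : Prop :=
  IsInner U ∧ (∀ f ∈ I, f ≠ 0 → DividesIn U f) ∧
  ∀ W : ℂ → ℂ, IsInner W → (∀ f ∈ I, f ≠ 0 → DividesIn W f) → DividesIn W U

/-- `J_ω(E, U)`. -/
def MemJU (ω : ModulusOfContinuity) (E : Set ℂ) (U : ℂ → ℂ) (f : ℂ → ℂ) : Prop :=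
  MemLip ω f ∧ (∀ ξ ∈ E, f ξ = 0) ∧ DividesIn U f ∧ JCond ω E f

/-- `E ⊆ 𝕋` has zero Lebesgue (arclength) measure. -/
def CircNull (E : Set ℂ) : Prop :=
  volume {θ : ℝ | θ ∈ Set.Ico (0:ℝ) (2 * Real.pi) ∧ Complex.exp ((θ : ℂ) * Complex.I) ∈ E} = 0

/-- The spectrum `σ(U) = {λ ∈ 𝔻̄ : liminf_{z→λ, z∈𝔻} |U z| = 0}`. -/
def innerSpec (U : ℂ → ℂ) : Set ℂ :=
  {l | l ∈ closedBall (0:ℂ) 1 ∧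
    Filter.liminf (fun z => ‖U z‖) (nhdsWithin l (ball (0:ℂ) 1)) = 0}

/-- An outer function: `F z = c · exp((1/2π) ∫ (e^{iθ}+z)/(e^{iθ}-z) w(θ) dθ)`
with `|c| = 1` and `w` integrable. -/
def IsOuter (F : ℂ → ℂ) : Prop :=
  ∃ c : ℂ, ‖c‖ = 1 ∧ ∃ w : ℝ → ℝ,
    IntervalIntegrable w volume 0 (2 * Real.pi) ∧
    ∀ z ∈ ball (0:ℂ) 1, F z = c * Complex.exp ((1 / (2 * Real.pi) : ℂ) *
      ∫ θ in (0:ℝ)..(2 * Real.pi),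
        ((Complex.exp ((θ : ℂ) * Complex.I) + z) / (Complex.exp ((θ : ℂ) * Complex.I) - z)) *
          (w θ : ℂ))

/-- Boundary zero set `E_f = {ξ ∈ 𝕋 : f ξ = 0}`. -/
def bdryZeroSet (f : ℂ → ℂ) : Set ℂ := {ξ | ξ ∈ sphere (0:ℂ) 1 ∧ f ξ = 0}

/-- `Δ ∈ Ω_E`: `Δ` is a union of connected components (complementary arcs) of `𝕋 \ E`. -/
def MemOmega (E : Set ℂ) (Δ : Set ℂ) : Prop :=
  Δ ⊆ sphere (0:ℂ) 1 \ E ∧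
  ∀ z ∈ Δ, connectedComponentIn (sphere (0:ℂ) 1 \ E) z ⊆ Δ

/-- The Korenblum outer function
`f_Γ z = exp((1/2π) ∫_Γ (ξ+z)/(ξ-z) log|f ξ| |dξ|)`. -/
def korenblum (f : ℂ → ℂ) (Γ : Set ℂ) (z : ℂ) : ℂ :=
  Complex.exp ((1 / (2 * Real.pi) : ℂ) *
    ∫ θ in (0:ℝ)..(2 * Real.pi),
      Set.indicator Γ
        (fun ξ => ((ξ + z) / (ξ - z)) * (Real.log (‖f ξ‖) : ℂ))
        (Complex.exp ((θ : ℂ) * Complex.I)))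

/-- A singular inner function with associated positive singular measure `μ`
(carried by `[0,2π)` via `θ ↦ e^{iθ}`). -/
def IsSingularInnerWith (S : ℂ → ℂ) (μ : Measure ℝ) : Prop :=
  μ Set.univ < ⊤ ∧ μ (Set.Ico (0:ℝ) (2 * Real.pi))ᶜ = 0 ∧
  μ.MutuallySingular volume ∧
  ∀ z ∈ ball (0:ℂ) 1, S z = Complex.exp (-(1 / (2 * Real.pi) : ℂ) *
    ∫ θ, ((Complex.exp ((θ : ℂ) * Complex.I) + z) /
      (Complex.exp ((θ : ℂ) * Complex.I) - z)) ∂μ)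

/-- Single Blaschke factor with zero `w` (with the conventions that `w = 0` gives the factor
`z`, and `|w| = 1` gives the constant factor `1`, used for padding). -/
def blaschkeFactor (w z : ℂ) : ℂ :=
  if w = 0 then z
  else ((‖w‖ : ℂ) / w) * (w - z) / (1 - (starRingEnd ℂ) w * z)

/-- `B` is the Blaschke product with zero sequence `a` (boundary points of the sequence
serve as padding, contributing factors `1`). -/
def IsBlaschkeOf (B : ℂ → ℂ) (a : ℕ → ℂ) : Prop :=
  (∀ n, ‖a n‖ ≤ 1) ∧ Summable (fun n => 1 - ‖a n‖) ∧
  ∀ z ∈ ball (0:ℂ) 1, HasProd (fun n => blaschkeFactor (a n) z) (B z)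

/-- Total-variation distance between two (finite) measures. -/
def tvDist (μ ν : Measure ℝ) : ℝ :=
  sSup {r : ℝ | ∃ s : Set ℝ, MeasurableSet s ∧ r = |(μ s).toReal - (ν s).toReal|}

/-- The function `z ↦ exp(-(1/2π) ∫ (e^{iθ}+z)/(e^{iθ}-z) dμ(θ))`, defining a singular
inner function on the disk together with its analytic extension off the support of `μ`. -/
def singExp (μ : Measure ℝ) (z : ℂ) : ℂ :=
  Complex.exp (-(1 / (2 * Real.pi) : ℂ) *
    ∫ θ, ((Complex.exp ((θ : ℂ) * Complex.I) + z) /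
      (Complex.exp ((θ : ℂ) * Complex.I) - z)) ∂μ)

/-- `a_U(ζ) = Σ_n (1-|z_n|²)/|ζ-z_n|² + (1/π) ∫ |e^{iθ}-ζ|⁻² dμ(θ)` for an inner function
with zeros `a` and singular measure `μ`. -/
def aFun (a : ℕ → ℂ) (μ : Measure ℝ) (ζ : ℂ) : ℝ :=
  (∑' n, (1 - ‖a n‖ ^ 2) / ‖ζ - a n‖ ^ 2) +
  (1 / Real.pi) * ∫ θ, (1 / ‖Complex.exp ((θ : ℂ) * Complex.I) - ζ‖ ^ 2) ∂μ

/-- `K_ω(E)` membership: the uniform smallness condition over pairs of points of the open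
disk near `E`. -/
def MemK (ω : ModulusOfContinuity) (E : Set ℂ) (f : ℂ → ℂ) : Prop :=
  MemI ω E f ∧
  ∀ ε > (0:ℝ), ∃ δ > (0:ℝ), ∀ z ∈ ball (0:ℂ) 1, ∀ w ∈ ball (0:ℂ) 1, z ≠ w →
    Metric.infDist z E ≤ δ → Metric.infDist w E ≤ δ →
    ‖f z - f w‖ ≤ ε * ω (‖z - w‖)

namespace JK

variable (ω : ModulusOfContinuity)



lemma om_nonneg {t : ℝ} (h0 : 0 ≤ t) (h2 : t ≤ 2) : 0 ≤ ω t := ω.nonneg t ⟨h0, h2⟩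

lemma om_mono {s t : ℝ} (hs0 : 0 ≤ s) (hst : s ≤ t) (ht2 : t ≤ 2) : ω s ≤ ω t :=
  ω.mono ⟨hs0, le_trans hst ht2⟩ ⟨le_trans hs0 hst, ht2⟩ hst

lemma om_div_anti {s t : ℝ} (hs : 0 < s) (hst : s ≤ t) (ht2 : t ≤ 2) :
    ω t / t ≤ ω s / s :=
  ω.quot_anti ⟨hs, le_trans hst ht2⟩ ⟨lt_of_lt_of_le hs hst, ht2⟩ hst

lemma om_mul_le {s t : ℝ} (hs : 0 < s) (hst : s ≤ t) (ht2 : t ≤ 2) :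
    s * ω t ≤ t * ω s := by
  have h := om_div_anti ω hs hst ht2
  have hs' : (0:ℝ) < s := hs
  have ht' : (0:ℝ) < t := lt_of_lt_of_le hs hst
  rw [div_le_div_iff₀ ht' hs'] at h
  nlinarith

lemma om_pos {t : ℝ} (h0 : 0 < t) (h2 : t ≤ 2) : 0 < ω t := by
  rcases lt_or_eq_of_le (om_nonneg ω (le_of_lt h0) h2) with h | h
  · exact h
  have h' : ω t = 0 := h.symm
  have hzero : ∀ s ∈ Set.Icc (0:ℝ) 2, ω s = 0 := by
    intro s hs
    rcases eq_or_lt_of_le hs.1 with h1 | h1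
    · rw [← h1]; exact ω.zero
    rcases le_or_gt s t with h3 | h3
    · have hm := om_mono ω (le_of_lt h1) h3 h2
      have hn := om_nonneg ω hs.1 hs.2
      linarith
    · have hq := om_mul_le ω h0 (le_of_lt h3) hs.2
      have hn := om_nonneg ω hs.1 hs.2
      nlinarith
  obtain ⟨s, hs, hsne⟩ := ω.nontrivial
  exact absurd (hzero s hs) hsne

lemma om_scale {l s t : ℝ} (hl : 1 ≤ l) (ht : 0 < t) (ht2 : t ≤ 2)
    (hs0 : 0 ≤ s) (hs2 : s ≤ 2) (hst : s ≤ l * t) : ω s ≤ l * ω t := by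
  rcases le_or_gt s t with h | h
  · have := om_mono ω hs0 h ht2
    nlinarith [om_nonneg ω (le_of_lt ht) ht2]
  · have h1 := om_mul_le ω ht (le_of_lt h) hs2
    nlinarith [om_nonneg ω (le_of_lt ht) ht2]

lemma om_line {t₀ s : ℝ} (ht : 0 < t₀) (ht2 : t₀ ≤ 2) (hs0 : 0 ≤ s) (hs2 : s ≤ 2) :
    ω s ≤ ω t₀ + (ω t₀ / t₀) * s := by
  rcases le_or_gt s t₀ with h | h
  · have h1 := om_mono ω hs0 h ht2
    have h2 : 0 ≤ (ω t₀ / t₀) * s := by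
      have := om_nonneg ω (le_of_lt ht) ht2
      positivity
    linarith
  · have h1 := om_mul_le ω ht (le_of_lt h) hs2
    have h2 : 0 ≤ ω t₀ := om_nonneg ω (le_of_lt ht) ht2
    have h3 : ω s ≤ (ω t₀ / t₀) * s := by
      rw [div_mul_eq_mul_div, le_div_iff₀ ht]
      nlinarith
    linarith

lemma sph_of_abs {x : ℂ} (hx : ‖x‖ = 1) : x ∈ sphere (0:ℂ) 1 := by
  rw [mem_sphere_iff_norm, sub_zero]; exact hx

lemma abs_of_sph {x : ℂ} (hx : x ∈ sphere (0:ℂ) 1) : ‖x‖ = 1 := by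
  rwa [mem_sphere_iff_norm, sub_zero] at hx

lemma om_zero : ω 0 = 0 := ω.zero

lemma triv_pair (c : ℝ) (hc : 0 ≤ c) (f : ℂ → ℂ) (x : ℂ) :
    ‖f x - f x‖ ≤ c * ω (‖x - x‖) := by
  rw [sub_self, sub_self, norm_zero]
  rw [show (ω : ℝ → ℝ) 0 = 0 from ω.zero, mul_zero]

lemma abs_le_two {x y : ℂ} (hx : ‖x‖ ≤ 1) (hy : ‖y‖ ≤ 1) :
    ‖x - y‖ ≤ 2 := by
  calc ‖x - y‖ ≤ ‖x‖ + ‖y‖ := by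
        simpa using norm_sub_le_norm_sub_add_norm_sub x 0 y
    _ ≤ 2 := by linarith

lemma lemP (f : ℂ → ℂ)
    (hc : ContinuousOn f (closedBall (0:ℂ) 1))
    (hdf : DifferentiableOn ℂ f (ball (0:ℂ) 1))
    (ζ : ℂ) (hζ : ‖ζ‖ = 1) (ρ ε C : ℝ)
    (hρ : 0 < ρ) (hε : 0 < ε) (hεC : ε ≤ C)
    (hnear : ∀ ξ ∈ sphere (0:ℂ) 1, ‖ξ - ζ‖ ≤ ρ →
      ‖f ξ - f ζ‖ ≤ ε * ω (‖ξ - ζ‖))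
    (hfar : ∀ ξ ∈ sphere (0:ℂ) 1,
      ‖f ξ - f ζ‖ ≤ C * ω (‖ξ - ζ‖))
    (z : ℂ) (hz : z ∈ closedBall (0:ℂ) 1)
    (hz0 : z ≠ ζ) (hzρ : ‖z - ζ‖ ≤ ρ / 10) :
    ‖f z - f ζ‖ ≤ 8 * Real.sqrt (ε * C) * ω (‖z - ζ‖) := by
  have hC : 0 < C := lt_of_lt_of_le hε hεC
  have habs2 : ∀ v ∈ closedBall (0:ℂ) 1, ‖v - ζ‖ ≤ 2 := by
    intro v hv
    have h1 : ‖v‖ ≤ 1 := by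
      simpa using mem_closedBall_zero_iff.mp hv
    calc ‖v - ζ‖ ≤ ‖v‖ + ‖ζ‖ := by
          simpa using norm_sub_le_norm_sub_add_norm_sub v 0 ζ
      _ ≤ 2 := by rw [hζ]; linarith
  set t₀ := ‖z - ζ‖ with ht₀def
  have ht₀pos : 0 < t₀ := norm_pos_iff.mpr (sub_ne_zero.mpr hz0)
  have ht₀2 : t₀ ≤ 2 := habs2 z hz
  set a := ω t₀ with ha_def
  set b := ω t₀ / t₀ with hb_def
  have ha : 0 < a := om_pos ω ht₀pos ht₀2
  have hb : 0 < b := div_pos ha ht₀pos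
  set L := Real.log (C / ε) with hL_def
  have hL : 0 ≤ L := Real.log_nonneg ((one_le_div hε).mpr hεC)
  set u : ℂ → ℂ := fun v => 1 - v * (starRingEnd ℂ) ζ with hu_def
  have hu_eq : ∀ v, u v = (ζ - v) * (starRingEnd ℂ) ζ := by
    intro v
    have h1 : ζ * (starRingEnd ℂ) ζ = ((Complex.normSq ζ : ℝ) : ℂ) := Complex.mul_conj ζ
    have h2 : Complex.normSq ζ = 1 := by
      rw [← Complex.sq_norm, hζ]; norm_num
    simp only [hu_def, sub_mul, h1, h2]
    push_cast
    ring
  have habs_u : ∀ v, ‖u v‖ = ‖v - ζ‖ := by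
    intro v
    rw [hu_eq, norm_mul, Complex.norm_conj, hζ, mul_one]
    rw [norm_sub_rev]
  have hre_u : ∀ v ∈ closedBall (0:ℂ) 1, 0 ≤ (u v).re := by
    intro v hv
    have h1 : (v * (starRingEnd ℂ) ζ).re ≤ ‖v * (starRingEnd ℂ) ζ‖ :=
      Complex.re_le_norm _
    have h2 : ‖v * (starRingEnd ℂ) ζ‖ ≤ 1 := by
      rw [norm_mul, Complex.norm_conj, hζ, mul_one]
      simpa using mem_closedBall_zero_iff.mp hv
    simp only [hu_def, Complex.sub_re, Complex.one_re]
    linarith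
  have hden_re : ∀ v ∈ closedBall (0:ℂ) 1, 0 < (u v + (ρ:ℂ)).re := by
    intro v hv
    simp only [Complex.add_re, Complex.ofReal_re]
    have := hre_u v hv
    linarith
  have hden_ne : ∀ v ∈ closedBall (0:ℂ) 1, u v + (ρ:ℂ) ≠ 0 := by
    intro v hv h
    have := hden_re v hv
    rw [h] at this
    simp at this
  set q : ℂ → ℂ := fun v => u v / (u v + (ρ:ℂ)) with hq_def
  have hN : ∀ v, Complex.normSq (u v + (ρ:ℂ)) =
      Complex.normSq (u v) + 2*ρ*(u v).re + ρ^2 := by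
    intro v
    simp only [Complex.normSq_apply, Complex.add_re, Complex.add_im, Complex.ofReal_re,
      Complex.ofReal_im]
    ring
  have hqre : ∀ v, (q v).re =
      (Complex.normSq (u v) + ρ * (u v).re) / Complex.normSq (u v + (ρ:ℂ)) := by
    intro v
    simp only [hq_def]
    rw [Complex.div_re]
    simp only [Complex.add_re, Complex.add_im, Complex.ofReal_re, Complex.ofReal_im,
      Complex.normSq_apply]
    ring
  have hNpos : ∀ v ∈ closedBall (0:ℂ) 1, 0 < Complex.normSq (u v + (ρ:ℂ)) := by
    intro v hv
    exact Complex.normSq_pos.mpr (hden_ne v hv)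
  have hq0 : ∀ v ∈ closedBall (0:ℂ) 1, 0 ≤ (q v).re := by
    intro v hv
    rw [hqre]
    apply div_nonneg _ (le_of_lt (hNpos v hv))
    have h1 := Complex.normSq_nonneg (u v)
    have h2 := hre_u v hv
    nlinarith only [h1, h2, hρ]
  have hqhalf : ∀ ξ ∈ closedBall (0:ℂ) 1, ρ ≤ ‖ξ - ζ‖ → 1/2 ≤ (q ξ).re := by
    intro ξ hξ h
    rw [hqre]
    rw [le_div_iff₀ (hNpos ξ hξ), hN]
    have h1 : Complex.normSq (u ξ) = ‖ξ - ζ‖^2 := by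
      rw [← habs_u, Complex.sq_norm]
    have h2 : ρ^2 ≤ Complex.normSq (u ξ) := by
      rw [h1]
      have := habs2 ξ hξ
      nlinarith only [this, hρ, h]
    nlinarith only [h2, hre_u ξ hξ, hρ]
  have hqz : (q z).re ≤ 1/4 := by
    rw [hqre]
    rw [div_le_iff₀ (hNpos z hz), hN]
    have h1 : Complex.normSq (u z) = t₀^2 := by
      rw [ht₀def, ← Complex.sq_norm (u z), habs_u]
    have h2 : (u z).re ≤ t₀ := by
      calc (u z).re ≤ ‖u z‖ := Complex.re_le_norm _
        _ = t₀ := by rw [habs_u]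
    have h3 := hre_u z hz
    nlinarith only [h1, h2, h3, ht₀pos, hρ, hzρ, Complex.normSq_nonneg (u z)]
  set Φ : ℂ → ℂ := fun v => ((a:ℂ) + (b:ℂ) * u v) * Complex.exp (((2*L : ℝ):ℂ) * q v)
    with hΦ_def
  have habsΦ : ∀ v, ‖Φ v‖ =
      ‖(a:ℂ) + (b:ℂ) * u v‖ * Real.exp (2*L*(q v).re) := by
    intro v
    rw [hΦ_def]
    simp only []
    rw [norm_mul, Complex.norm_exp]
    congr 2
    simp [Complex.mul_re]
  have hre_A : ∀ v ∈ closedBall (0:ℂ) 1, a ≤ ((a:ℂ) + (b:ℂ) * u v).re := by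
    intro v hv
    have h1 : ((b:ℂ) * u v).re = b * (u v).re := by
      simp [Complex.mul_re]
    simp only [Complex.add_re, Complex.ofReal_re, h1]
    have h2 := hre_u v hv
    nlinarith only [h2, hb]
  have hAup : ∀ v, ‖(a:ℂ) + (b:ℂ) * u v‖ ≤ a + b * ‖v - ζ‖ := by
    intro v
    calc ‖(a:ℂ) + (b:ℂ) * u v‖
        ≤ ‖(a:ℂ)‖ + ‖(b:ℂ) * u v‖ := norm_add_le _ _
      _ = a + b * ‖v - ζ‖ := by
          rw [norm_mul, Complex.norm_real, Real.norm_eq_abs, Complex.norm_real, Real.norm_eq_abs, habs_u,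
            abs_of_pos ha, abs_of_pos hb]
  have hAlow : ∀ v ∈ closedBall (0:ℂ) 1,
      (a + b * ‖v - ζ‖)/4 ≤ ‖(a:ℂ) + (b:ℂ) * u v‖ := by
    intro v hv
    have f1 : a ≤ ‖(a:ℂ) + (b:ℂ) * u v‖ :=
      le_trans (hre_A v hv) (Complex.re_le_norm _)
    have f2 : b * ‖v - ζ‖ - a ≤ ‖(a:ℂ) + (b:ℂ) * u v‖ := by
      have h1 : ‖(b:ℂ) * u v‖ ≤
          ‖(a:ℂ) + (b:ℂ) * u v‖ + ‖(a:ℂ)‖ := by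
        calc ‖(b:ℂ) * u v‖ = ‖((a:ℂ) + (b:ℂ) * u v) - (a:ℂ)‖ := by
              ring_nf
          _ ≤ _ := by
              simpa using norm_sub_le_norm_sub_add_norm_sub ((a:ℂ) + (b:ℂ) * u v) 0 (a:ℂ)
      rw [norm_mul, Complex.norm_real, Real.norm_eq_abs, habs_u, abs_of_pos hb] at h1
      rw [Complex.norm_real, Real.norm_eq_abs, abs_of_pos ha] at h1
      linarith
    linarith
  have hAne : ∀ v ∈ closedBall (0:ℂ) 1, (a:ℂ) + (b:ℂ) * u v ≠ 0 := by
    intro v hv h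
    have := hre_A v hv
    rw [h] at this
    simp at this
    linarith
  have hΦne : ∀ v ∈ closedBall (0:ℂ) 1, Φ v ≠ 0 := by
    intro v hv
    exact mul_ne_zero (hAne v hv) (Complex.exp_ne_zero _)
  have hΦpos : ∀ v ∈ closedBall (0:ℂ) 1, 0 < ‖Φ v‖ := by
    intro v hv
    exact norm_pos_iff.mpr (hΦne v hv)
  -- differentiability / continuity
  have hu_d : Differentiable ℂ u := by
    simp only [hu_def]
    exact (differentiable_const _).sub (differentiable_id.mul_const _)
  have hden_d : Differentiable ℂ (fun v => u v + (ρ:ℂ)) := hu_d.add_const _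
  have hq_dOn : DifferentiableOn ℂ q (ball (0:ℂ) 1) :=
    (hu_d.differentiableOn).div (hden_d.differentiableOn)
      (fun v hv => hden_ne v (ball_subset_closedBall hv))
  have hΦ_dOn : DifferentiableOn ℂ Φ (ball (0:ℂ) 1) := by
    apply DifferentiableOn.mul
    · exact (differentiableOn_const _).add ((differentiableOn_const _).mul hu_d.differentiableOn)
    · exact ((differentiableOn_const _).mul hq_dOn).cexp
  have hq_c : ContinuousOn q (closedBall (0:ℂ) 1) :=
    (hu_d.continuous.continuousOn).div (hden_d.continuous.continuousOn)
      (fun v hv => hden_ne v hv)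
  have hΦ_c : ContinuousOn Φ (closedBall (0:ℂ) 1) := by
    apply ContinuousOn.mul
    · exact continuousOn_const.add (continuousOn_const.mul hu_d.continuous.continuousOn)
    · exact (continuousOn_const.mul hq_c).cexp
  set G : ℂ → ℂ := fun v => (f v - f ζ) * (Φ v)⁻¹ with hG_def
  have hG_dOn : DifferentiableOn ℂ G (ball (0:ℂ) 1) :=
    (hdf.sub (differentiableOn_const _)).mul
      (hΦ_dOn.inv (fun v hv => hΦne v (ball_subset_closedBall hv)))
  have hG_c : ContinuousOn G (closedBall (0:ℂ) 1) :=
    (hc.sub continuousOn_const).mul (hΦ_c.inv₀ hΦne)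
  have habsG : ∀ v, ‖G v‖ = ‖f v - f ζ‖ * (‖Φ v‖)⁻¹ := by
    intro v
    rw [hG_def]
    simp only []
    rw [norm_mul, norm_inv]
  -- boundary bound
  have hbd : ∀ x ∈ frontier (ball (0:ℂ) 1), ‖G x‖ ≤ 4*ε := by
    intro x hx
    rw [frontier_ball 0 one_ne_zero] at hx
    have hxcb : x ∈ closedBall (0:ℂ) 1 := sphere_subset_closedBall hx
    set s := ‖x - ζ‖ with hs_def
    have hs0 : 0 ≤ s := norm_nonneg _
    have hs2 : s ≤ 2 := habs2 x hxcb
    have hline : ω s ≤ a + b * s := om_line ω ht₀pos ht₀2 hs0 hs2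
    rw [habsG, ← div_eq_mul_inv, div_le_iff₀ (hΦpos x hxcb)]
    rw [habsΦ]
    have hAl : (a + b * s)/4 ≤ ‖(a:ℂ) + (b:ℂ) * u x‖ := hAlow x hxcb
    set A := ‖(a:ℂ) + (b:ℂ) * u x‖ with hA_def
    set Ex := Real.exp (2*L*(q x).re) with hEx_def
    have hA0 : 0 ≤ A := norm_nonneg _
    have hexp0 : (1:ℝ) ≤ Ex := by
      rw [hEx_def]
      apply Real.one_le_exp
      have h0 := hq0 x hxcb
      positivity
    rcases le_or_gt s ρ with hcase | hcase
    · have h1 : ‖f x - f ζ‖ ≤ ε * ω s := hnear x hx hcase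
      have h2 : ε * ω s ≤ ε * (a + b * s) :=
        mul_le_mul_of_nonneg_left hline (le_of_lt hε)
      have h3 : ε * (a + b * s) ≤ 4 * ε * A := by nlinarith only [hAl, hε]
      have h4 : 4 * ε * A ≤ 4 * ε * (A * Ex) := by
        have h9 := mul_nonneg (mul_nonneg hε.le hA0) (sub_nonneg.mpr hexp0)
        nlinarith only [h9]
      linarith only [h1, h2, h3, h4]
    · have h1 : ‖f x - f ζ‖ ≤ C * ω s := hfar x hx
      have h2 : C * ω s ≤ C * (a + b * s) :=
        mul_le_mul_of_nonneg_left hline (le_of_lt hC)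
      have hexpC : C / ε ≤ Ex := by
        have h3 : L ≤ 2*L*(q x).re := by
          have h5 := hqhalf x hxcb (le_of_lt hcase)
          nlinarith only [h5, hL]
        calc C / ε = Real.exp L := by rw [hL_def, Real.exp_log (div_pos hC hε)]
          _ ≤ _ := by rw [hEx_def]; exact Real.exp_le_exp.mpr h3
      have h4 : C ≤ ε * Ex := by
        rw [div_le_iff₀ hε] at hexpC
        linarith only [hexpC]
      have h5 : C * (a + b * s) ≤ 4 * (C * A) := by nlinarith only [hAl, hC]
      have h6 : 4 * (C * A) ≤ 4 * ((ε * Ex) * A) := by nlinarith only [h4, hA0]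
      have h7 : (4:ℝ) * ((ε * Ex) * A) = 4 * ε * (A * Ex) := by ring
      linarith only [h1, h2, h5, h6, h7]
  -- maximum principle
  have hG_dc : DiffContOnCl ℂ G (ball (0:ℂ) 1) :=
    ⟨hG_dOn, by rw [closure_ball (0:ℂ) one_ne_zero]; exact hG_c⟩
  have hzc : z ∈ closure (ball (0:ℂ) 1) := by
    rw [closure_ball (0:ℂ) one_ne_zero]; exact hz
  have hmax := Complex.norm_le_of_forall_mem_frontier_norm_le isBounded_ball hG_dc hbd hzc
  rw [habsG, ← div_eq_mul_inv, div_le_iff₀ (hΦpos z hz)] at hmax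
  -- final estimate
  have hsqrt : ε * Real.exp (L/2) = Real.sqrt (ε * C) := by
    have h1 : (ε * Real.exp (L/2))^2 = ε * C := by
      rw [mul_pow, sq (Real.exp (L/2)), ← Real.exp_add]
      have : L/2 + L/2 = L := by ring
      rw [this, hL_def, Real.exp_log (div_pos hC hε)]
      field_simp
    rw [← h1, Real.sqrt_sq (by positivity)]
  have hΦz : ‖Φ z‖ ≤ 2 * ω t₀ * Real.exp (L/2) := by
    rw [habsΦ]
    have h1 : ‖(a:ℂ) + (b:ℂ) * u z‖ ≤ a + b * t₀ := by
      rw [ht₀def]; exact hAup z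
    have h2 : a + b * t₀ = 2 * ω t₀ := by
      rw [ha_def, hb_def, div_mul_cancel₀ _ (ne_of_gt ht₀pos)]
      ring
    have h3 : Real.exp (2*L*(q z).re) ≤ Real.exp (L/2) := by
      apply Real.exp_le_exp.mpr
      nlinarith only [hqz, hq0 z hz, hL]
    have h4 : 0 < Real.exp (L/2) := Real.exp_pos _
    have h5 : 0 ≤ ‖(a:ℂ) + (b:ℂ) * u z‖ := norm_nonneg _
    have h6 : 0 < Real.exp (2*L*(q z).re) := Real.exp_pos _
    calc ‖(a:ℂ) + (b:ℂ) * u z‖ * Real.exp (2*L*(q z).re)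
        ≤ (a + b * t₀) * Real.exp (L/2) := by
          apply mul_le_mul h1 h3 (le_of_lt h6)
          nlinarith only [ha, hb, ht₀pos]
      _ = 2 * ω t₀ * Real.exp (L/2) := by rw [h2]
  calc ‖f z - f ζ‖ ≤ 4*ε * ‖Φ z‖ := hmax
    _ ≤ 4*ε * (2 * ω t₀ * Real.exp (L/2)) := by
          apply mul_le_mul_of_nonneg_left hΦz
          positivity
    _ = 8 * (ε * Real.exp (L/2)) * ω t₀ := by ring
    _ = 8 * Real.sqrt (ε * C) * ω t₀ := by rw [hsqrt]

lemma lemS (f : ℂ → ℂ) (hdf : DifferentiableOn ℂ f (ball (0:ℂ) 1))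
    (ε₂ : ℝ) (hε₂ : 0 < ε₂) (z w ξ : ℂ)
    (hzb : z ∈ ball (0:ℂ) 1)
    (hξ : ‖ξ‖ = 1) (hdist : ‖z - ξ‖ = 1 - ‖z‖)
    (hzw : z ≠ w) (ht : ‖z - w‖ ≤ (1 - ‖z‖)/2)
    (hL1 : ∀ v ∈ closedBall (0:ℂ) 1, ‖v - ξ‖ ≤ 2*(1 - ‖z‖) →
      ‖f v - f ξ‖ ≤ ε₂ * ω (‖v - ξ‖)) :
    ‖f z - f w‖ ≤ 6 * ε₂ * ω (‖z - w‖) := by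
  have hzlt : ‖z‖ < 1 := by
    simpa using mem_ball_zero_iff.mp hzb
  set d := 1 - ‖z‖ with hd_def
  have hd0 : 0 < d := by rw [hd_def]; linarith
  have hd1 : d ≤ 1 := by
    have := norm_nonneg z
    rw [hd_def]; linarith
  set t := ‖z - w‖ with ht_def
  have ht0 : 0 < t := norm_pos_iff.mpr (sub_ne_zero.mpr hzw)
  have ht2 : t ≤ 2 := by
    rw [ht_def]
    calc ‖z - w‖ ≤ (1 - ‖z‖)/2 := ht
      _ ≤ 2 := by linarith [norm_nonneg z]
  set R := 3*d/4 with hR_def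
  clear_value d t R
  have hRpos : 0 < R := by rw [hR_def]; linarith
  have hsub : ball z R ⊆ ball (0:ℂ) 1 := by
    intro v hv
    rw [mem_ball] at hv
    rw [mem_ball_zero_iff]
    have h1 : dist v 0 ≤ dist v z + dist z 0 := dist_triangle v z 0
    simp only [dist_zero_right] at h1
    linarith
  have hωd : 0 < ω d := om_pos ω hd0 (le_trans hd1 one_le_two)
  have key : ∀ v ∈ ball z R, ‖f v - f z‖ < 4 * ε₂ * ω d := by
    intro v hv
    have hvb : v ∈ ball (0:ℂ) 1 := hsub hv
    have hvcb : v ∈ closedBall (0:ℂ) 1 := ball_subset_closedBall hvb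
    have hzcb : z ∈ closedBall (0:ℂ) 1 := ball_subset_closedBall hzb
    have hvz : ‖v - z‖ < R := by
      rw [mem_ball, dist_eq_norm] at hv
      exact hv
    have hvξ : ‖v - ξ‖ ≤ 2*d := by
      calc ‖v - ξ‖ ≤ ‖v - z‖ + ‖z - ξ‖ :=
            norm_sub_le_norm_sub_add_norm_sub v z ξ
        _ ≤ R + d := by rw [hdist]; linarith
        _ ≤ 2*d := by rw [hR_def]; linarith
    have h1 : ‖f v - f ξ‖ ≤ ε₂ * ω (‖v - ξ‖) :=
      hL1 v hvcb hvξ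
    have h2 : ‖f z - f ξ‖ ≤ ε₂ * ω d := by
      have h2' := hL1 z hzcb (by rw [hdist]; linarith)
      rwa [hdist] at h2'
    have h3 : ω (‖v - ξ‖) ≤ 2 * ω d := by
      apply om_scale ω one_le_two hd0 (le_trans hd1 one_le_two) (norm_nonneg _)
      · linarith
      · exact hvξ
    have h4 : ‖f v - f z‖ ≤ ‖f v - f ξ‖ + ‖f ξ - f z‖ :=
      norm_sub_le_norm_sub_add_norm_sub _ _ _
    have h5 : ‖f ξ - f z‖ = ‖f z - f ξ‖ := by
      rw [norm_sub_rev]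
    nlinarith only [h1, h2, h3, h4, h5, hε₂, hωd]
  have hmaps : MapsTo f (ball z R) (ball (f z) (4 * ε₂ * ω d)) := by
    intro v hv
    rw [mem_ball, dist_eq_norm]
    exact key v hv
  have hwball : w ∈ ball z R := by
    rw [mem_ball, dist_eq_norm, norm_sub_rev,
      ← ht_def]
    rw [hR_def]
    linarith
  have hS := Complex.dist_le_div_mul_dist_of_mapsTo_ball (hdf.mono hsub) (hmaps.mono_right ball_subset_closedBall) hwball
  rw [dist_eq_norm, dist_eq_norm] at hS
  have h6 : ‖f w - f z‖ = ‖f z - f w‖ := by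
    rw [norm_sub_rev]
  have h7 : ‖w - z‖ = t := by
    rw [norm_sub_rev, ← ht_def]
  rw [h6, h7] at hS
  have hq : t * ω d ≤ d * ω t := om_mul_le ω ht0 (by linarith) (by linarith)
  have hfin : 4 * ε₂ * ω d / R * t ≤ 6 * ε₂ * ω t := by
    rw [hR_def, div_mul_eq_mul_div, div_le_iff₀ (by linarith : (0:ℝ) < 3*d/4)]
    have h8 := mul_le_mul_of_nonneg_left hq hε₂.le
    have h9 : 0 ≤ ε₂ * (d * ω t) := by
      have := om_nonneg ω ht0.le ht2
      positivity
    nlinarith only [h8, h9]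
  linarith only [hS, hfin]

lemma proj_exists (z : ℂ) :
    ‖z‖ ≤ 1 → ∃ ξ : ℂ, ‖ξ‖ = 1 ∧
      ‖z - ξ‖ = 1 - ‖z‖ := by
  intro hz
  by_cases h0 : z = 0
  · refine ⟨1, by simp, by simp [h0]⟩
  · have hr : 0 < ‖z‖ := norm_pos_iff.mpr h0
    refine ⟨((‖z‖ : ℝ) : ℂ)⁻¹ * z, ?_, ?_⟩
    · rw [norm_mul, norm_inv, Complex.norm_real, Real.norm_eq_abs, abs_of_pos hr,
        inv_mul_cancel₀ (ne_of_gt hr)]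
    · have h1 : z - ((‖z‖ : ℝ) : ℂ)⁻¹ * z
          = (1 - ((‖z‖ : ℝ) : ℂ)⁻¹) * z := by ring
      rw [h1, norm_mul]
      have hco : ((1:ℂ) - ((‖z‖ : ℝ) : ℂ)⁻¹)
          = (((1 - (‖z‖)⁻¹ : ℝ)) : ℂ) := by push_cast; ring
      rw [hco, Complex.norm_real, Real.norm_eq_abs]
      have h2 : (1:ℝ) ≤ (‖z‖)⁻¹ := (one_le_inv₀ hr).mpr hz
      rw [abs_of_nonpos (by linarith)]
      field_simp
      ring

lemma assemble (f : ℂ → ℂ) (hdf : DifferentiableOn ℂ f (ball (0:ℂ) 1))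
    (E : Set ℂ) (ε₁ ε₂ δ δ₁ : ℝ) (hε₁ : 0 < ε₁) (hε₂ : 0 < ε₂)
    (hpair : ∀ ξ ζ : ℂ, ‖ξ‖ = 1 → ‖ζ‖ = 1 →
      Metric.infDist ξ E ≤ δ₁ → Metric.infDist ζ E ≤ δ₁ → ξ ≠ ζ →
      ‖f ξ - f ζ‖ ≤ ε₁ * ω (‖ξ - ζ‖))
    (KEY : ∀ z ∈ ball (0:ℂ) 1, Metric.infDist z E ≤ δ → ∃ ξ : ℂ,
      ‖ξ‖ = 1 ∧ ‖z - ξ‖ = 1 - ‖z‖ ∧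
      Metric.infDist ξ E ≤ δ₁ ∧
      (∀ v ∈ closedBall (0:ℂ) 1, ‖v - ξ‖ ≤ 2*(1 - ‖z‖) →
        ‖f v - f ξ‖ ≤ ε₂ * ω (‖v - ξ‖))) :
    ∀ z ∈ ball (0:ℂ) 1, ∀ w ∈ ball (0:ℂ) 1, z ≠ w →
      Metric.infDist z E ≤ δ → Metric.infDist w E ≤ δ →
      ‖f z - f w‖ ≤ (6*ε₂ + 5*ε₁) * ω (‖z - w‖) := by
  intro z hz w hw hne hdz hdw
  have ht0 : 0 < ‖z - w‖ := norm_pos_iff.mpr (sub_ne_zero.mpr hne)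
  have hza : ‖z‖ < 1 := by
    simpa using mem_ball_zero_iff.mp hz
  have hwa : ‖w‖ < 1 := by
    simpa using mem_ball_zero_iff.mp hw
  have ht2 : ‖z - w‖ ≤ 2 := by
    calc ‖z - w‖ ≤ ‖z‖ + ‖w‖ := by
          simpa using norm_sub_le_norm_sub_add_norm_sub z 0 w
      _ ≤ 2 := by linarith
  have hωt : 0 ≤ ω (‖z - w‖) := om_nonneg ω ht0.le ht2
  obtain ⟨ξz, hξz1, hξzd, hξzE, hξzL⟩ := KEY z hz hdz
  obtain ⟨ξw, hξw1, hξwd, hξwE, hξwL⟩ := KEY w hw hdw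
  rcases le_or_gt (‖z - w‖) ((1 - ‖z‖)/2) with hcase1 | hcase1
  · have h := lemS ω f hdf ε₂ hε₂ z w ξz hz hξz1 hξzd hne hcase1 hξzL
    calc ‖f z - f w‖ ≤ 6 * ε₂ * ω (‖z - w‖) := h
      _ ≤ (6*ε₂ + 5*ε₁) * ω (‖z - w‖) := by nlinarith only [hε₁, hωt]
  rcases le_or_gt (‖w - z‖) ((1 - ‖w‖)/2) with hcase2 | hcase2
  · have h := lemS ω f hdf ε₂ hε₂ w z ξw hw hξw1 hξwd (Ne.symm hne) hcase2 hξwL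
    have heq : ‖w - z‖ = ‖z - w‖ := by
      rw [norm_sub_rev]
    have heqf : ‖f w - f z‖ = ‖f z - f w‖ := by
      rw [norm_sub_rev]
    rw [heq, heqf] at h
    calc ‖f z - f w‖ ≤ 6 * ε₂ * ω (‖z - w‖) := h
      _ ≤ (6*ε₂ + 5*ε₁) * ω (‖z - w‖) := by nlinarith only [hε₁, hωt]
  · -- both boundary distances are small compared with |z-w|
    set t := ‖z - w‖ with ht_def
    have heqwz : ‖w - z‖ = t := by
      rw [ht_def, norm_sub_rev]
    rw [heqwz] at hcase2
    have hdz2 : 1 - ‖z‖ < 2*t := by linarith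
    have hdw2 : 1 - ‖w‖ < 2*t := by linarith
    have hzcb : z ∈ closedBall (0:ℂ) 1 := ball_subset_closedBall hz
    have hwcb : w ∈ closedBall (0:ℂ) 1 := ball_subset_closedBall hw
    -- term 1
    have hA1 : ‖f z - f ξz‖ ≤ 2 * ε₂ * ω t := by
      have h1 := hξzL z hzcb (by rw [hξzd]; linarith)
      rw [hξzd] at h1
      have h2 : ω (1 - ‖z‖) ≤ 2 * ω t :=
        om_scale ω one_le_two ht0 ht2 (by linarith) (by linarith [norm_nonneg z]) (le_of_lt hdz2)
      nlinarith only [h1, h2, hε₂]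
    -- term 3
    have hA3 : ‖f ξw - f w‖ ≤ 2 * ε₂ * ω t := by
      have h1 := hξwL w hwcb (by rw [hξwd]; linarith)
      rw [hξwd] at h1
      have h2 : ω (1 - ‖w‖) ≤ 2 * ω t :=
        om_scale ω one_le_two ht0 ht2 (by linarith) (by linarith [norm_nonneg w]) (le_of_lt hdw2)
      have h3 : ‖f ξw - f w‖ = ‖f w - f ξw‖ := by
        rw [norm_sub_rev]
      rw [h3]
      nlinarith only [h1, h2, hε₂]
    -- term 2
    have hA2 : ‖f ξz - f ξw‖ ≤ 5 * ε₁ * ω t := by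
      by_cases hξξ : ξz = ξw
      · rw [hξξ, sub_self, norm_zero]
        have := om_nonneg ω ht0.le ht2
        positivity
      · have h1 := hpair ξz ξw hξz1 hξw1 hξzE hξwE hξξ
        have hs2 : ‖ξz - ξw‖ ≤ 2 := by
          calc ‖ξz - ξw‖ ≤ ‖ξz‖ + ‖ξw‖ := by
                simpa using norm_sub_le_norm_sub_add_norm_sub ξz 0 ξw
            _ ≤ 2 := by rw [hξz1, hξw1]; norm_num
        have hs5 : ‖ξz - ξw‖ ≤ 5 * t := by
          have e1 : ‖ξz - ξw‖ ≤
              ‖ξz - z‖ + ‖z - w‖ + ‖w - ξw‖ := by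
            have e2 := norm_sub_le_norm_sub_add_norm_sub ξz z ξw
            have e3 := norm_sub_le_norm_sub_add_norm_sub z w ξw
            linarith
          have e4 : ‖ξz - z‖ = 1 - ‖z‖ := by
            rw [norm_sub_rev, hξzd]
          have e5 : ‖w - ξw‖ = 1 - ‖w‖ := hξwd
          rw [e4, e5, ← ht_def] at e1
          linarith
        have h2 : ω (‖ξz - ξw‖) ≤ 5 * ω t := by
          apply om_scale ω (by norm_num) ht0 ht2 (norm_nonneg _) hs2 hs5
        nlinarith only [h1, h2, hε₁]
    have htri : ‖f z - f w‖ ≤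
        ‖f z - f ξz‖ + ‖f ξz - f ξw‖ + ‖f ξw - f w‖ := by
      have e1 := norm_sub_le_norm_sub_add_norm_sub (f z) (f ξz) (f w)
      have e2 := norm_sub_le_norm_sub_add_norm_sub (f ξz) (f ξw) (f w)
      linarith
    calc ‖f z - f w‖ ≤ 2*ε₂*ω t + 5*ε₁*ω t + 2*ε₂*ω t := by
          linarith only [htri, hA1, hA2, hA3]
      _ ≤ (6*ε₂ + 5*ε₁) * ω t := by nlinarith only [hε₂, hωt]


end JK

/-- **Proposition (coincide).** `J_ω(E) = K_ω(E)`. -/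
theorem J_eq_K
    (ω : ModulusOfContinuity)
    (E : Set ℂ) (hEsub : E ⊆ sphere (0:ℂ) 1) (hEclosed : IsClosed E) (hEnull : CircNull E) :
    {f : ℂ → ℂ | MemJ ω E f} = {f : ℂ → ℂ | MemK ω E f} := by
  ext f
  simp only [Set.mem_setOf_eq]
  constructor
  · -- J ⊆ K : the hard direction
    rintro ⟨hI, hJ⟩
    refine ⟨hI, ?_⟩
    obtain ⟨⟨hc, hdf, C₀, hC⟩, hvan⟩ := hI
    intro ε hε
    set ε' := min ε 1 with hε'_def
    have hε'0 : 0 < ε' := lt_min hε one_pos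
    have hε'ε : ε' ≤ ε := min_le_left _ _
    have hε'1 : ε' ≤ 1 := min_le_right _ _
    set C₁ := max C₀ 1 with hC₁_def
    have hC₁1 : (1:ℝ) ≤ C₁ := le_max_right _ _
    have hC₁0 : (0:ℝ) < C₁ := lt_of_lt_of_le one_pos hC₁1
    have hC₁' : ∀ ξ ∈ sphere (0:ℂ) 1, ∀ ζ ∈ sphere (0:ℂ) 1,
        ‖f ξ - f ζ‖ ≤ C₁ * ω (‖ξ - ζ‖) := by
      intro ξ hξ ζ hζ
      by_cases h : ξ = ζ
      · rw [h]; exact JK.triv_pair ω C₁ hC₁0.le f ζ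
      · have h1 := hC ξ hξ ζ hζ h
        have h2 : 0 ≤ ω (‖ξ - ζ‖) := by
          apply JK.om_nonneg ω (norm_nonneg _)
          exact JK.abs_le_two (le_of_eq (JK.abs_of_sph hξ)) (le_of_eq (JK.abs_of_sph hζ))
        have h3 : C₀ ≤ C₁ := le_max_left _ _
        nlinarith only [h1, h2, h3]
    set ε₂ := ε'/12 with hε₂_def
    have hε₂0 : 0 < ε₂ := by positivity
    set ε₁ := min (ε'/10) (ε₂^2/(64*C₁)) with hε₁_def
    have hε₁0 : 0 < ε₁ := lt_min (by positivity) (by positivity)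
    have h8 : 8 * Real.sqrt (ε₁ * C₁) ≤ ε₂ := by
      have h2 : ε₁ ≤ ε₂^2/(64*C₁) := min_le_right _ _
      have h1 : ε₁ * C₁ ≤ ε₂^2/64 := by
        have h4 := mul_le_mul_of_nonneg_right h2 hC₁0.le
        have h5 : ε₂^2/(64*C₁)*C₁ = ε₂^2/64 := by field_simp
        linarith
      calc 8 * Real.sqrt (ε₁ * C₁) ≤ 8 * Real.sqrt (ε₂^2/64) := by
            have := Real.sqrt_le_sqrt h1
            linarith
        _ = ε₂ := by
            rw [show ε₂^2/64 = (ε₂/8)^2 by ring, Real.sqrt_sq (by positivity)]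
            ring
    have hε₁C₁ : ε₁ ≤ C₁ := by
      have h2 : ε₁ ≤ ε₂^2/(64*C₁) := min_le_right _ _
      have h3 : ε₂ ≤ 1 := by rw [hε₂_def]; linarith
      have h4 : ε₂^2/(64*C₁) ≤ C₁ := by
        rw [div_le_iff₀ (by positivity)]
        nlinarith only [hC₁1, h3, hε₂0]
      linarith
    obtain ⟨δ₁, hδ₁, hJδ⟩ := hJ ε₁ hε₁0
    have hpair : ∀ ξ ζ : ℂ, ‖ξ‖ = 1 → ‖ζ‖ = 1 →
        Metric.infDist ξ E ≤ δ₁ → Metric.infDist ζ E ≤ δ₁ → ξ ≠ ζ →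
        ‖f ξ - f ζ‖ ≤ ε₁ * ω (‖ξ - ζ‖) := by
      intro ξ ζ h1 h2 h3 h4 h5
      exact hJδ ξ ⟨JK.sph_of_abs h1, h3⟩ ζ ⟨JK.sph_of_abs h2, h4⟩ h5
    have hfinish : ∀ δ' > (0:ℝ),
        (∀ z ∈ ball (0:ℂ) 1, Metric.infDist z E ≤ δ' → ∃ ξ : ℂ,
          ‖ξ‖ = 1 ∧ ‖z - ξ‖ = 1 - ‖z‖ ∧
          Metric.infDist ξ E ≤ δ₁ ∧
          (∀ v ∈ closedBall (0:ℂ) 1, ‖v - ξ‖ ≤ 2*(1 - ‖z‖) →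
            ‖f v - f ξ‖ ≤ ε₂ * ω (‖v - ξ‖))) →
        ∃ δ > (0:ℝ), ∀ z ∈ ball (0:ℂ) 1, ∀ w ∈ ball (0:ℂ) 1, z ≠ w →
          Metric.infDist z E ≤ δ → Metric.infDist w E ≤ δ →
          ‖f z - f w‖ ≤ ε * ω (‖z - w‖) := by
      intro δ' hδ' KEY
      refine ⟨δ', hδ', ?_⟩
      intro z hz w hw hne h1 h2
      have hmain := JK.assemble ω f hdf E ε₁ ε₂ δ' δ₁ hε₁0 hε₂0 hpair KEY z hz w hw hne h1 h2
      have hza : ‖z‖ < 1 := by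
        simpa using mem_ball_zero_iff.mp hz
      have hwa : ‖w‖ < 1 := by
        simpa using mem_ball_zero_iff.mp hw
      have hωt : 0 ≤ ω (‖z - w‖) :=
        JK.om_nonneg ω (norm_nonneg _) (JK.abs_le_two hza.le hwa.le)
      have hε₁' : ε₁ ≤ ε'/10 := min_le_left _ _
      have hco : 6*ε₂ + 5*ε₁ ≤ ε := by
        rw [hε₂_def] at *
        linarith
      nlinarith only [hmain, hωt, hco]
    -- the one-point boundary estimate, packaged
    have hL1gen : ∀ ρ : ℝ, 0 < ρ → ∀ ξ : ℂ, ‖ξ‖ = 1 →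
        (∀ ξ' ∈ sphere (0:ℂ) 1, ‖ξ' - ξ‖ ≤ ρ →
          ‖f ξ' - f ξ‖ ≤ ε₁ * ω (‖ξ' - ξ‖)) →
        ∀ v ∈ closedBall (0:ℂ) 1, ‖v - ξ‖ ≤ ρ/10 →
          ‖f v - f ξ‖ ≤ ε₂ * ω (‖v - ξ‖) := by
      intro ρ hρ ξ hξ1 hnear v hv hvρ
      by_cases hveq : v = ξ
      · rw [hveq]; exact JK.triv_pair ω ε₂ hε₂0.le f ξ
      · have hfar : ∀ ξ' ∈ sphere (0:ℂ) 1,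
            ‖f ξ' - f ξ‖ ≤ C₁ * ω (‖ξ' - ξ‖) := by
          intro ξ' hξ'
          exact hC₁' ξ' hξ' ξ (JK.sph_of_abs hξ1)
        have hlem := JK.lemP ω f hc hdf ξ hξ1 ρ ε₁ C₁ hρ hε₁0 hε₁C₁ hnear hfar v hv
          hveq hvρ
        have hωv : 0 ≤ ω (‖v - ξ‖) := by
          apply JK.om_nonneg ω (norm_nonneg _)
          apply JK.abs_le_two _ (le_of_eq hξ1)
          simpa using mem_closedBall_zero_iff.mp hv
        nlinarith only [hlem, h8, hωv, Real.sqrt_nonneg (ε₁ * C₁)]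
    rcases Set.eq_empty_or_nonempty E with hEe | hEne
    · -- E empty
      apply hfinish 1 one_pos
      intro z hz _
      have hza : ‖z‖ < 1 := by
        simpa using mem_ball_zero_iff.mp hz
      obtain ⟨ξ, hξ1, hξd⟩ := JK.proj_exists z hza.le
      refine ⟨ξ, hξ1, hξd, ?_, ?_⟩
      · rw [hEe, Metric.infDist_empty]; exact hδ₁.le
      · intro v hv hvr
        apply hL1gen 30 (by norm_num) ξ hξ1 ?_ v hv ?_
        · intro ξ' hξ' _
          by_cases h : ξ' = ξ
          · rw [h]; exact JK.triv_pair ω ε₁ hε₁0.le f ξ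
          · apply hpair ξ' ξ (JK.abs_of_sph hξ') hξ1 ?_ ?_ h
            · rw [hEe, Metric.infDist_empty]; exact hδ₁.le
            · rw [hEe, Metric.infDist_empty]; exact hδ₁.le
        · have : ‖v - ξ‖ ≤ 2 := by
            apply JK.abs_le_two _ (le_of_eq hξ1)
            simpa using mem_closedBall_zero_iff.mp hv
          linarith
    · -- E nonempty
      set δ := δ₁/200 with hδ_def
      have hδ0 : 0 < δ := by rw [hδ_def]; linarith
      apply hfinish δ hδ0
      intro z hz hdz
      have hza : ‖z‖ < 1 := by
        simpa using mem_ball_zero_iff.mp hz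
      obtain ⟨e, heE, hez⟩ := (Metric.infDist_lt_iff hEne).mp
        (lt_of_le_of_lt hdz (by linarith : δ < 2*δ))
      have he1 : ‖e‖ = 1 := JK.abs_of_sph (hEsub heE)
      have hdzlow : 1 - ‖z‖ ≤ 2*δ := by
        have h1 : ‖e‖ - ‖z‖ ≤ ‖e - z‖ := norm_sub_norm_le e z
        rw [he1] at h1
        have h2 : dist z e = ‖e - z‖ := by
          rw [dist_eq_norm, norm_sub_rev]
        rw [h2] at hez
        linarith
      obtain ⟨ξ, hξ1, hξd⟩ := JK.proj_exists z hza.le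
      have hξE : Metric.infDist ξ E ≤ 4*δ := by
        have h1 : Metric.infDist ξ E ≤ dist ξ e := Metric.infDist_le_dist_of_mem heE
        have h2 : dist ξ e ≤ dist ξ z + dist z e := dist_triangle ξ z e
        have h3 : dist ξ z = 1 - ‖z‖ := by
          rw [dist_comm, dist_eq_norm, hξd]
        linarith
      refine ⟨ξ, hξ1, hξd, by linarith, ?_⟩
      intro v hv hvr
      apply hL1gen (δ₁/2) (by linarith) ξ hξ1 ?_ v hv ?_
      · intro ξ' hξ' hd'
        by_cases h : ξ' = ξ
        · rw [h]; exact JK.triv_pair ω ε₁ hε₁0.le f ξ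
        · apply hpair ξ' ξ (JK.abs_of_sph hξ') hξ1 ?_ (by linarith) h
          have h4 : Metric.infDist ξ' E ≤ Metric.infDist ξ E + dist ξ' ξ :=
            Metric.infDist_le_infDist_add_dist
          have h5 : dist ξ' ξ = ‖ξ' - ξ‖ := by
            rw [dist_eq_norm]
          rw [hδ_def] at *
          linarith
      · rw [hδ_def] at *
        linarith
  · -- K ⊆ J : the easy direction (radial limits)
    rintro ⟨hI, hK⟩
    refine ⟨hI, ?_⟩
    obtain ⟨⟨hc, hdf, C₀, hC⟩, hvan⟩ := hI
    intro ε hε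
    obtain ⟨δ, hδ, hKδ⟩ := hK ε hε
    refine ⟨δ/2, by linarith, ?_⟩
    rintro ξ ⟨hξs, hξE⟩ ζ ⟨hζs, hζE⟩ hne
    have hξ1 : ‖ξ‖ = 1 := JK.abs_of_sph hξs
    have hζ1 : ‖ζ‖ = 1 := JK.abs_of_sph hζs
    have hconv : ∀ x : ℂ, ‖x‖ = 1 →
        Filter.Tendsto (fun r : ℝ => f ((r:ℂ) * x)) (nhdsWithin 1 (Set.Iio 1))
          (nhds (f x)) := by
      intro x hx
      have hxcb : x ∈ closedBall (0:ℂ) 1 := by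
        rw [mem_closedBall_zero_iff, hx]
      have h1 : Filter.Tendsto (fun r : ℝ => (r:ℂ) * x) (nhdsWithin 1 (Set.Iio 1))
          (nhds x) := by
        have hcont : Continuous (fun r : ℝ => (r:ℂ) * x) :=
          (Complex.continuous_ofReal).mul continuous_const
        have h2 := hcont.tendsto 1
        simp only [Complex.ofReal_one, one_mul] at h2
        exact h2.mono_left nhdsWithin_le_nhds
      have h3 : ∀ᶠ r : ℝ in nhdsWithin 1 (Set.Iio 1),
          (fun r : ℝ => (r:ℂ) * x) r ∈ closedBall (0:ℂ) 1 := by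
        filter_upwards [Ioo_mem_nhdsLT_of_mem
          (show (1:ℝ) ∈ Set.Ioc 0 1 from ⟨one_pos, le_refl 1⟩)] with r hr
        rw [mem_closedBall_zero_iff, norm_mul, Complex.norm_real, Real.norm_eq_abs,
          hx, mul_one]
        rw [abs_of_pos hr.1]
        exact hr.2.le
      have h4 : Filter.Tendsto (fun r : ℝ => (r:ℂ) * x) (nhdsWithin 1 (Set.Iio 1))
          (nhdsWithin x (closedBall (0:ℂ) 1)) :=
        tendsto_nhdsWithin_iff.mpr ⟨h1, h3⟩
      exact ((hc x hxcb).tendsto).comp h4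
    have hT : Filter.Tendsto (fun r : ℝ => ‖f ((r:ℂ)*ξ) - f ((r:ℂ)*ζ)‖)
        (nhdsWithin 1 (Set.Iio 1)) (nhds (‖f ξ - f ζ‖)) :=
      (continuous_norm.tendsto _).comp ((hconv ξ hξ1).sub (hconv ζ hζ1))
    apply le_of_tendsto hT
    have hlow : max 0 (1 - δ/2) < 1 := by
      apply max_lt one_pos
      linarith
    filter_upwards [Ioo_mem_nhdsLT_of_mem
      (show (1:ℝ) ∈ Set.Ioc (max 0 (1 - δ/2)) 1 from ⟨hlow, le_refl 1⟩)] with r hr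
    have hr0 : 0 < r := lt_of_le_of_lt (le_max_left _ _) hr.1
    have hr1 : r < 1 := hr.2
    have hrδ : 1 - δ/2 < r := lt_of_le_of_lt (le_max_right _ _) hr.1
    have hmb : ∀ x : ℂ, ‖x‖ = 1 → (r:ℂ)*x ∈ ball (0:ℂ) 1 := by
      intro x hx
      rw [mem_ball_zero_iff, norm_mul, Complex.norm_real, Real.norm_eq_abs, hx,
        mul_one, abs_of_pos hr0]
      exact hr1
    have hne' : (r:ℂ)*ξ ≠ (r:ℂ)*ζ := by
      intro h
      apply hne
      have hr0' : ((r:ℝ):ℂ) ≠ 0 := by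
        simpa using ne_of_gt hr0
      exact mul_left_cancel₀ hr0' h
    have hinf : ∀ x : ℂ, ‖x‖ = 1 → Metric.infDist x E ≤ δ/2 →
        Metric.infDist ((r:ℂ)*x) E ≤ δ := by
      intro x hx hxd
      have h5 : dist ((r:ℂ)*x) x = 1 - r := by
        rw [dist_eq_norm]
        have h6 : (r:ℂ)*x - x = ((r - 1 : ℝ):ℂ)*x := by push_cast; ring
        rw [h6, norm_mul, Complex.norm_real, Real.norm_eq_abs, hx, mul_one,
          abs_of_nonpos (by linarith)]
        ring
      calc Metric.infDist ((r:ℂ)*x) E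
          ≤ Metric.infDist x E + dist ((r:ℂ)*x) x := Metric.infDist_le_infDist_add_dist
        _ ≤ δ/2 + (1 - r) := by rw [h5]; linarith
        _ ≤ δ := by linarith
    have hb := hKδ ((r:ℂ)*ξ) (hmb ξ hξ1) ((r:ℂ)*ζ) (hmb ζ hζ1) hne'
      (hinf ξ hξ1 hξE) (hinf ζ hζ1 hζE)
    have habsr : ‖(r:ℂ)*ξ - (r:ℂ)*ζ‖ = r * ‖ξ - ζ‖ := by
      rw [show (r:ℂ)*ξ - (r:ℂ)*ζ = (r:ℂ)*(ξ - ζ) by ring, norm_mul, Complex.norm_real, Real.norm_eq_abs,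
        abs_of_pos hr0]
    rw [habsr] at hb
    have hs2 : ‖ξ - ζ‖ ≤ 2 := JK.abs_le_two (le_of_eq hξ1) (le_of_eq hζ1)
    have hmono : ω (r * ‖ξ - ζ‖) ≤ ω (‖ξ - ζ‖) := by
      apply JK.om_mono ω (by positivity) ?_ hs2
      nlinarith only [norm_nonneg (ξ - ζ), hr1, hr0]
    calc ‖f ((r:ℂ)*ξ) - f ((r:ℂ)*ζ)‖ ≤ ε * ω (r * ‖ξ - ζ‖) := hb
      _ ≤ ε * ω (‖ξ - ζ‖) := mul_le_mul_of_nonneg_left hmono hε.le
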